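/- Let a be a finite-dimensional nilpotent associative algebra over a finite field F_q. The size of every coadjoint orbit of G = 1 + a on a* is an even power of q, i.e., equals q^(2m) for some natural number m. -/

import Mathlib

set_option linter.unusedSectionVars false

open Unitization Module
local notation "fst" x:max => Prod.fst (Unitization.toProd x)
local notation "snd" x:max => Prod.snd (Unitization.toProd x)

variable {F : Type*} [Field F] [Fintype F]
  (a : Type*) [NonUnitalRing a] [Module F a] [SMulCommClass F a a] [IsScalarTower F a a]

/-- The coadjoint action `(Ad*(g)λ)(x) = λ(g⁻¹ x g)`. -/
noncomputable def coAd (g : (Unitization F a)ˣ) (l : Module.Dual F a) : Module.Dual F a :=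
  l ∘ₗ (sndHom F F a) ∘ₗ (LinearMap.mulRight F ((g : Unitization F a))) ∘ₗ
    (LinearMap.mulLeft F (((g⁻¹ : (Unitization F a)ˣ) : Unitization F a))) ∘ₗ (inrHom F F a)




lemma alt_even_aux {K : Type*} [Field K] (n : ℕ) : ∀ {V : Type*} [AddCommGroup V] [Module K V]
    [FiniteDimensional K V] (B : LinearMap.BilinForm K V), B.IsAlt →
    finrank K V = n → ∃ m, n = finrank K (LinearMap.ker B) + 2 * m := by
  induction n using Nat.strong_induction_on with
  | _ n IH =>
    intro V _ _ _ B hB hn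
    by_cases hz : B = 0
    · refine ⟨0, ?_⟩
      rw [hz, LinearMap.ker_zero, finrank_top, hn, mul_zero, add_zero]
    · obtain ⟨x, hx⟩ : ∃ x, B x ≠ 0 := by
        by_contra h; push_neg at h
        exact hz (by ext u v; simp [h u])
      obtain ⟨y, hxy⟩ : ∃ y, B x y ≠ 0 := by
        by_contra h; push_neg at h
        exact hx (by ext v; simp [h v])
      have hyx : B y x ≠ 0 := by
        rw [← LinearMap.IsAlt.neg hB x y]; simpa using hxy
      have hli : LinearIndependent K ![x, y] := by
        rw [LinearIndependent.pair_iff]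
        intro s t hst
        have h1 : B (s • x + t • y) y = 0 := by rw [hst]; simp
        have h2 : B (s • x + t • y) x = 0 := by rw [hst]; simp
        simp only [map_add, map_smul, LinearMap.add_apply, LinearMap.smul_apply,
          hB.self_eq_zero, smul_zero, add_zero, zero_add, smul_eq_mul, mul_zero,
          zero_mul] at h1 h2
        exact ⟨(mul_eq_zero.mp h1).resolve_right hxy,
          (mul_eq_zero.mp h2).resolve_right hyx⟩
      set W : Submodule K V := Submodule.span K {x, y} with hWdef
      have hxW : x ∈ W := Submodule.subset_span (by simp)
      have hyW : y ∈ W := Submodule.subset_span (by simp)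
      have hW2 : finrank K W = 2 := by
        have hr : Set.range ![x, y] = {x, y} := by
          ext z
          simp [Fin.exists_fin_two, or_comm]
        rw [hWdef, ← hr, finrank_span_eq_card hli, Fintype.card_fin]
      have hres : (B.restrict W).Nondegenerate := by
        refine (LinearMap.IsRefl.nondegenerate_iff_separatingLeft (B := B.restrict W)
          (fun u v => hB.isRefl u v)).mpr ?_
        rintro ⟨u, hu⟩ h
        obtain ⟨s, t, rfl⟩ := Submodule.mem_span_pair.mp hu
        have h1 := h ⟨y, hyW⟩
        have h2 := h ⟨x, hxW⟩
        simp only [LinearMap.BilinForm.restrict_apply, LinearMap.domRestrict_apply,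
          map_add, map_smul, LinearMap.add_apply, LinearMap.smul_apply,
          hB.self_eq_zero, smul_zero, add_zero, zero_add, smul_eq_mul, mul_zero,
          zero_mul] at h1 h2
        have hs : s = 0 := (mul_eq_zero.mp h1).resolve_right hxy
        have ht : t = 0 := (mul_eq_zero.mp h2).resolve_right hyx
        ext
        simp [hs, ht]
      have hc : IsCompl W (B.orthogonal W) :=
        B.isCompl_orthogonal_of_restrict_nondegenerate hB.isRefl hres
      set Wp := B.orthogonal W with hWp
      have hsum : finrank K W + finrank K Wp = n := by
        rw [Submodule.finrank_add_eq_of_isCompl hc, hn]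
      have hker : (LinearMap.ker (B.restrict Wp)).map Wp.subtype = LinearMap.ker B := by
        ext v
        constructor
        · rintro ⟨⟨u, hu⟩, hku, rfl⟩
          simp only [SetLike.mem_coe, LinearMap.mem_ker, Submodule.subtype_apply] at hku ⊢
          ext w
          have hw : w ∈ W ⊔ Wp := by rw [hc.sup_eq_top]; trivial
          obtain ⟨w1, hw1, w2, hw2, rfl⟩ := Submodule.mem_sup.mp hw
          have e1 : B u w1 = 0 := hB.isRefl w1 u (hu w1 hw1)
          have e2 : B u w2 = 0 := by
            have := DFunLike.congr_fun hku ⟨w2, hw2⟩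
            simpa using this
          simp [e1, e2]
        · intro hv
          simp only [SetLike.mem_coe, LinearMap.mem_ker] at hv
          have hvW : v ∈ Wp := by
            intro w _
            exact hB.isRefl v w (by rw [hv]; rfl)
          refine ⟨⟨v, hvW⟩, ?_, rfl⟩
          simp only [SetLike.mem_coe, LinearMap.mem_ker]
          ext w
          simp [LinearMap.BilinForm.restrict_apply, hv]
      have hlt : finrank K Wp < n := by omega
      obtain ⟨m, hm⟩ := IH (finrank K Wp) hlt (B.restrict Wp)
        (fun u => hB u) rfl
      refine ⟨m + 1, ?_⟩
      have hfr : finrank K (LinearMap.ker (B.restrict Wp)) = finrank K (LinearMap.ker B) := by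
        rw [← hker, Submodule.finrank_map_subtype_eq]
      omega


variable {a}


lemma coAd_apply (g : (Unitization F a)ˣ) (l : Module.Dual F a) (x : a) :
    coAd a g l x = l (snd (((g⁻¹ : (Unitization F a)ˣ) : Unitization F a) * inr x *
      (g : Unitization F a))) := rfl

lemma inr_snd_of_fst_eq_zero {u : Unitization F a} (h : fst u = 0) :
    (inr (snd u) : Unitization F a) = u := by
  conv_rhs => rw [← Unitization.inl_fst_add_inr_snd_eq u]
  rw [h, Unitization.inl_zero, zero_add]

noncomputable instance coAdAction : MulAction (Unitization F a)ˣ (Module.Dual F a) where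
  smul g l := coAd a g l
  one_smul l := by
    show coAd a 1 l = l
    ext x
    rw [coAd_apply]
    simp
  mul_smul g h l := by
    show coAd a (g * h) l = coAd a g (coAd a h l)
    ext x
    rw [coAd_apply, coAd_apply, coAd_apply]
    have h0 : fst (((g⁻¹ : (Unitization F a)ˣ) : Unitization F a) * inr x *
        (g : Unitization F a)) = 0 := by
      simp [Unitization.fst_mul]
    rw [inr_snd_of_fst_eq_zero h0]
    congr 2
    simp only [mul_inv_rev, Units.val_mul]
    noncomm_ring

lemma smul_def (g : (Unitization F a)ˣ) (l : Module.Dual F a) : g • l = coAd a g l := rfl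

/-- The subgroup `1 + a`. -/
def Hgrp (F : Type*) [Field F] (a : Type*) [NonUnitalRing a] [Module F a]
    [SMulCommClass F a a] [IsScalarTower F a a] : Subgroup (Unitization F a)ˣ where
  carrier := {g | fst (g : Unitization F a) = 1}
  one_mem' := by simp
  mul_mem' := by
    intro g h hg hh
    simp only [Set.mem_setOf_eq, Units.val_mul, Unitization.fst_mul] at *
    rw [hg, hh, one_mul]
  inv_mem' := by
    intro g hg
    simp only [Set.mem_setOf_eq] at *
    have : fst (((g⁻¹ : (Unitization F a)ˣ) : Unitization F a) * (g : Unitization F a)) = 1 := by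
      rw [Units.inv_mul]; simp
    rw [Unitization.fst_mul, hg, mul_one] at this
    exact this

lemma mem_Hgrp_iff {g : (Unitization F a)ˣ} :
    g ∈ Hgrp F a ↔ ∃ x : a, (g : Unitization F a) = 1 + inr x := by
  constructor
  · intro hg
    refine ⟨snd (g : Unitization F a), ?_⟩
    conv_lhs => rw [← Unitization.inl_fst_add_inr_snd_eq (g : Unitization F a)]
    rw [show fst (g : Unitization F a) = 1 from hg, Unitization.inl_one]
  · rintro ⟨x, hx⟩
    show fst (g : Unitization F a) = 1
    rw [hx]
    simp

lemma snd_mul_of_fst_one {u : Unitization F a} (h : fst u = 1) (y : a) :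
    snd (u * inr y) = y + snd u * y ∧ snd (inr y * u) = y + y * snd u := by
  constructor
  · rw [Unitization.snd_mul, h, Unitization.fst_inr, Unitization.snd_inr]
    simp
  · rw [Unitization.snd_mul, h, Unitization.fst_inr, Unitization.snd_inr]
    simp [add_comm]

/-- Characterization of the stabilizer condition. -/
lemma coAd_fixed_iff {g : (Unitization F a)ˣ} (hg : fst (g : Unitization F a) = 1)
    (lam : Module.Dual F a) :
    coAd a g lam = lam ↔ ∀ y : a, lam (snd (g : Unitization F a) * y) =
      lam (y * snd (g : Unitization F a)) := by
  have hGiG : ((g⁻¹ : (Unitization F a)ˣ) : Unitization F a) * (g : Unitization F a) = 1 := by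
    exact_mod_cast g.inv_mul
  have hGGi : (g : Unitization F a) * ((g⁻¹ : (Unitization F a)ˣ) : Unitization F a) = 1 := by
    exact_mod_cast g.mul_inv
  constructor
  · intro h y
    have h0 : fst ((g : Unitization F a) * inr y) = 0 := by simp [Unitization.fst_mul]
    have e1 : (inr (snd ((g : Unitization F a) * inr y)) : Unitization F a) =
        (g : Unitization F a) * inr y := inr_snd_of_fst_eq_zero h0
    have h2 := DFunLike.congr_fun h (snd ((g : Unitization F a) * inr y))
    rw [coAd_apply, e1, ← mul_assoc, hGiG, one_mul] at h2
    rw [(snd_mul_of_fst_one hg y).1, (snd_mul_of_fst_one hg y).2, map_add, map_add] at h2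
    exact (add_left_cancel h2).symm
  · intro h
    ext y
    rw [coAd_apply]
    have h0 : fst (((g⁻¹ : (Unitization F a)ˣ) : Unitization F a) * inr y) = 0 := by
      simp [Unitization.fst_mul]
    have e1 : (inr (snd (((g⁻¹ : (Unitization F a)ˣ) : Unitization F a) * inr y)) :
        Unitization F a) = ((g⁻¹ : (Unitization F a)ˣ) : Unitization F a) * inr y :=
      inr_snd_of_fst_eq_zero h0
    set w : a := snd (((g⁻¹ : (Unitization F a)ˣ) : Unitization F a) * inr y) with hw
    have step : snd (((g⁻¹ : (Unitization F a)ˣ) : Unitization F a) * inr y *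
        (g : Unitization F a)) = w + w * snd (g : Unitization F a) := by
      conv_lhs => rw [← e1]
      exact (snd_mul_of_fst_one hg w).2
    rw [step, map_add, ← h w, ← map_add]
    have step2 : (w : a) + snd (g : Unitization F a) * w =
        snd ((g : Unitization F a) * inr w) := ((snd_mul_of_fst_one hg w).1).symm
    rw [step2, e1, ← mul_assoc, hGGi, one_mul]
    simp



variable (a)

/-- For a finite-dimensional nilpotent associative algebra `a` over `F_q`, the size of
every coadjoint orbit of `G = 1 + a` on `a*` is an even power of `q`. -/
theorem stmt8 [FiniteDimensional F a]
    (hnil : ∃ n : ℕ, 0 < n ∧ ∀ f : Fin n → a,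
      (List.ofFn (fun i => (inr (f i) : Unitization F a))).prod = 0)
    (lam : Module.Dual F a) :
    ∃ m : ℕ, Nat.card {mu : Module.Dual F a |
        ∃ g : (Unitization F a)ˣ, (∃ x : a, (g : Unitization F a) = 1 + inr x) ∧
          coAd a g lam = mu}
      = Fintype.card F ^ (2 * m) := by
  classical
  obtain ⟨n, hn0, hf⟩ := hnil
  have hnilp : ∀ x : a, IsNilpotent (inr x : Unitization F a) := by
    intro x
    refine ⟨n, ?_⟩
    have := hf (fun _ => x)
    rwa [List.ofFn_const, List.prod_replicate] at this
  have hfin : Finite a := Module.finite_of_finite F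
  have hfinU : Finite (Unitization F a) :=
    Finite.of_equiv _ (Unitization.addEquiv F a).symm.toEquiv
  have hfinD : Finite (Module.Dual F a) := Module.finite_of_finite F
  -- the set is the orbit of `lam` under the subgroup `Hgrp F a`
  have hset : {mu : Module.Dual F a |
      ∃ g : (Unitization F a)ˣ, (∃ x : a, (g : Unitization F a) = 1 + inr x) ∧
        coAd a g lam = mu} = MulAction.orbit (Hgrp F a) lam := by
    ext mu
    simp only [Set.mem_setOf_eq, MulAction.mem_orbit_iff]
    constructor
    · rintro ⟨g, hg1, hg2⟩
      exact ⟨⟨g, mem_Hgrp_iff.mpr hg1⟩, hg2⟩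
    · rintro ⟨⟨g, hg⟩, h⟩
      exact ⟨g, mem_Hgrp_iff.mp hg, h⟩
  -- the bilinear form B x y = lam (x*y) - lam (y*x)
  set Bf : LinearMap.BilinForm F a :=
    ((LinearMap.mul F a).compr₂ lam) - ((LinearMap.mul F a).flip.compr₂ lam) with hBf
  have hBalt : Bf.IsAlt := by
    intro x
    simp [hBf, LinearMap.compr₂_apply, LinearMap.mul_apply']
  have hmemker : ∀ x : a, x ∈ LinearMap.ker Bf ↔ ∀ y, lam (x * y) = lam (y * x) := by
    intro x
    rw [LinearMap.mem_ker]
    constructor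
    · intro h y
      have := DFunLike.congr_fun h y
      simpa [hBf, LinearMap.compr₂_apply, LinearMap.mul_apply', sub_eq_zero] using this
    · intro h
      ext y
      simp [hBf, LinearMap.compr₂_apply, LinearMap.mul_apply', sub_eq_zero, h y]
  -- |H| = |a|
  have hcardH : Nat.card (Hgrp F a) = Nat.card a := by
    apply Nat.card_eq_of_bijective
      (fun g => snd (((g : (Hgrp F a)) : (Unitization F a)ˣ) : Unitization F a))
    constructor
    · rintro ⟨g1, hg1⟩ ⟨g2, hg2⟩ h
      simp only at h
      have h1 : fst ((g1 : (Unitization F a)ˣ) : Unitization F a) = 1 := hg1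
      have h2 : fst ((g2 : (Unitization F a)ˣ) : Unitization F a) = 1 := hg2
      have : ((g1 : (Unitization F a)ˣ) : Unitization F a) = g2 :=
        Unitization.ext (by rw [h1, h2]) h
      exact Subtype.ext (Units.ext this)
    · intro x
      have hu : IsUnit (1 + (inr x : Unitization F a)) := (hnilp x).isUnit_one_add
      have hH : hu.unit ∈ Hgrp F a := by
        show fst ((hu.unit : (Unitization F a)ˣ) : Unitization F a) = 1
        rw [hu.unit_spec]
        simp
      refine ⟨⟨hu.unit, hH⟩, ?_⟩
      show snd ((hu.unit : (Unitization F a)ˣ) : Unitization F a) = x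
      rw [hu.unit_spec]
      simp
  -- |Stab| = |ker Bf|
  have hstab_mem : ∀ g : (Unitization F a)ˣ, (hg : g ∈ Hgrp F a) →
      ((⟨g, hg⟩ : Hgrp F a) ∈ MulAction.stabilizer (Hgrp F a) lam ↔
        snd (g : Unitization F a) ∈ LinearMap.ker Bf) := by
    intro g hg
    have hg1 : fst (g : Unitization F a) = 1 := hg
    rw [MulAction.mem_stabilizer_iff, hmemker]
    have : (⟨g, hg⟩ : Hgrp F a) • lam = coAd a g lam := rfl
    rw [this]
    exact coAd_fixed_iff hg1 lam
  have hcardS : Nat.card (MulAction.stabilizer (Hgrp F a) lam)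
      = Nat.card (LinearMap.ker Bf) := by
    apply Nat.card_eq_of_bijective
      (fun (g : MulAction.stabilizer (Hgrp F a) lam) =>
      (⟨snd (((g.1 : (Unitization F a)ˣ)) : Unitization F a),
        (hstab_mem g.1.1 g.1.2).mp g.2⟩ : LinearMap.ker Bf))
    constructor
    · rintro ⟨⟨g1, hg1⟩, hs1⟩ ⟨⟨g2, hg2⟩, hs2⟩ h
      simp only [Subtype.mk.injEq] at h
      have h1 : fst ((g1 : (Unitization F a)ˣ) : Unitization F a) = 1 := hg1
      have h2 : fst ((g2 : (Unitization F a)ˣ) : Unitization F a) = 1 := hg2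
      have : ((g1 : (Unitization F a)ˣ) : Unitization F a) = g2 :=
        Unitization.ext (by rw [h1, h2]) h
      exact Subtype.ext (Subtype.ext (Units.ext this))
    · rintro ⟨x, hx⟩
      have hu : IsUnit (1 + (inr x : Unitization F a)) := (hnilp x).isUnit_one_add
      have hH : hu.unit ∈ Hgrp F a := by
        show fst ((hu.unit : (Unitization F a)ˣ) : Unitization F a) = 1
        rw [hu.unit_spec]
        simp
      have hsnd : snd ((hu.unit : (Unitization F a)ˣ) : Unitization F a) = x := by
        rw [hu.unit_spec]; simp
      have hS : (⟨hu.unit, hH⟩ : Hgrp F a) ∈ MulAction.stabilizer (Hgrp F a) lam := by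
        rw [hstab_mem _ hH, hsnd]
        exact hx
      exact ⟨⟨⟨hu.unit, hH⟩, hS⟩, Subtype.ext hsnd⟩
  -- cardinalities as powers of q
  letI : Fintype a := Fintype.ofFinite a
  have hcarda : Nat.card a = Fintype.card F ^ finrank F a := by
    rw [Nat.card_eq_fintype_card, card_eq_pow_finrank (K := F)]
  letI : Fintype (LinearMap.ker Bf) := Fintype.ofFinite _
  have hcardk : Nat.card (LinearMap.ker Bf)
      = Fintype.card F ^ finrank F (LinearMap.ker Bf) := by
    rw [Nat.card_eq_fintype_card, card_eq_pow_finrank (K := F)]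
  -- orbit-stabilizer
  letI : Fintype (Hgrp F a) := Fintype.ofFinite _
  letI : Fintype (MulAction.orbit (Hgrp F a) lam) := Fintype.ofFinite _
  letI : Fintype (MulAction.stabilizer (Hgrp F a) lam) := Fintype.ofFinite _
  have hOS := MulAction.card_orbit_mul_card_stabilizer_eq_card_group (Hgrp F a) lam
  rw [← Nat.card_eq_fintype_card, ← Nat.card_eq_fintype_card, ← Nat.card_eq_fintype_card] at hOS
  -- evenness
  obtain ⟨m, hm⟩ := alt_even_aux (finrank F a) Bf hBalt rfl
  refine ⟨m, ?_⟩
  rw [hset]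
  have hq1 : 0 < Fintype.card F ^ finrank F (LinearMap.ker Bf) :=
    pow_pos Fintype.card_pos _
  rw [hcardS, hcardk, hcardH, hcarda, hm] at hOS
  apply Nat.eq_of_mul_eq_mul_right hq1
  rw [hOS, pow_add]
  exact mul_comm _ _
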